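/- Let [a_0; a_1, …, a_n] be a (σ,k)-permutiple. Then it is continuant-preserving, i.e., K_{n+1}(a_0, …, a_n) = K_{n+1}(a_{σ(0)}, …, a_{σ(n)}), if and only if K_n(a_{σ(1)}, …, a_{σ(n)}) = k·K_n(a_1, …, a_n). -/

import Mathlib

/-- Value of the finite simple continued fraction `[x₀; x₁, …, xₙ]`. -/
def cfv : List ℚ → ℚ
  | [] => 0
  | [x] => x
  | x :: y :: t => x + 1 / cfv (y :: t)

/-- The continuant `K(x₀, …, xₙ)`: `K() = 1`, `K(x₀) = x₀`, and the usual
three-term recurrence. -/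
def cont : List ℕ → ℕ
  | [] => 1
  | [x] => x
  | x :: y :: t => x * cont (y :: t) + cont t

/-- The digit string of `a`, as a list of rationals. -/
def digitsQ {N : ℕ} (a : Fin N → ℕ) : List ℚ := (List.ofFn a).map (fun x => (x : ℚ))

/-- `[a₀; a₁, …, aₙ]` (canonical: positive digits, last digit ≥ 2) is a
`(σ,k)`-permutiple: it equals `k` times the continued fraction of the permuted digits. -/
def IsPermutiple {n : ℕ} (a : Fin (n+1) → ℕ) (σ : Equiv.Perm (Fin (n+1))) (k : ℕ) : Prop :=
  (∀ j, 0 < a j) ∧ 2 ≤ a (Fin.last n) ∧ 1 < k ∧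
    cfv (digitsQ a) = k * cfv (digitsQ (a ∘ σ))

/-- A `(σ,k)`-permutiple is continuant-preserving if
`K(a₀,…,aₙ) = K(a_{σ(0)},…,a_{σ(n)})`. -/
def ContinuantPreserving {n : ℕ} (a : Fin (n+1) → ℕ) (σ : Equiv.Perm (Fin (n+1))) : Prop :=
  cont (List.ofFn a) = cont (List.ofFn (a ∘ σ))

/-- A `(σ,k)`-permutiple is perfect if `a_j = k·a_{σ(j)}` for even `j` and
`a_{σ(j)} = k·a_j` for odd `j`. -/
def IsPerfect {n : ℕ} (a : Fin (n+1) → ℕ) (σ : Equiv.Perm (Fin (n+1))) (k : ℕ) : Prop :=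
  ∀ j : Fin (n+1), (Even (j : ℕ) → a j = k * a (σ j)) ∧ (Odd (j : ℕ) → a (σ j) = k * a j)

/-- A `(σ,k)`-permutiple is symmetric if `a_j·a_{n−j} = a_{σ(j)}·a_{σ(n−j)}` for all `j`. -/
def IsSymmetric {n : ℕ} (a : Fin (n+1) → ℕ) (σ : Equiv.Perm (Fin (n+1))) : Prop :=
  ∀ j : Fin (n+1), a j * a j.rev = a (σ j) * a (σ j.rev)

/-- A Landess permutiple: a continuant-preserving `(σ,k)`-permutiple with
`q_{n−1} = q'_{n−1}` and `p_{n−1} = k·p'_{n−1}`. -/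
def IsLandess {n : ℕ} (a : Fin (n+1) → ℕ) (σ : Equiv.Perm (Fin (n+1))) (k : ℕ) : Prop :=
  IsPermutiple a σ k ∧ ContinuantPreserving a σ ∧
    cont ((List.ofFn a).tail.dropLast) = cont ((List.ofFn (a ∘ σ)).tail.dropLast) ∧
    cont ((List.ofFn a).dropLast) = k * cont ((List.ofFn (a ∘ σ)).dropLast)

/-- A `(σ,k)`-permutiple is continuant-preserving iff
`K_n(a_{σ(1)},…,a_{σ(n)}) = k·K_n(a_1,…,a_n)`. -/
lemma cont_pos (l : List ℕ) (h : ∀ x ∈ l, 0 < x) : 0 < cont l := by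
  induction l using cont.induct with
  | case1 => simp [cont]
  | case2 x => simpa [cont] using h x (by simp)
  | case3 x y t ih =>
    have hx := h x (by simp)
    have : 0 < cont (y :: t) := ih (fun z hz => h z (by simp [hz]))
    simp only [cont]
    exact Nat.add_pos_left (Nat.mul_pos hx this) _

lemma coeM_eq (l : List ℕ) : (l.map (fun x => (x : ℚ))) = l.map (Nat.cast : ℕ → ℚ) := by
  induction l with
  | nil => rfl
  | cons x t ih =>
    show (x : ℚ) :: _ = _
    rw [List.map_cons]
    exact congrArg _ ih

lemma cfv_eq (l : List ℕ) (h : ∀ x ∈ l, 0 < x) (hne : l ≠ []) :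
    cfv (l.map (Nat.cast : ℕ → ℚ)) = (cont l : ℚ) / (cont l.tail : ℚ) := by
  induction l using cont.induct with
  | case1 => exact absurd rfl hne
  | case2 x => simp [cfv, cont]
  | case3 x y t ih =>
    have hyt : (0:ℚ) < cont (y :: t) := by
      exact_mod_cast cont_pos _ (fun z hz => h z (by simp [hz]))
    have ht : (0:ℚ) < cont t := by
      exact_mod_cast cont_pos _ (fun z hz => h z (by simp [hz]))
    have ihv := ih (fun z hz => h z (by simp [hz])) (by simp)
    rw [List.map_cons] at ihv
    rw [List.map_cons, List.map_cons]
    show (x : ℚ) + 1 / cfv ((y : ℚ) :: (t.map (Nat.cast : ℕ → ℚ))) = _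
    rw [ihv]
    show _ = ((x * cont (y :: t) + cont t : ℕ) : ℚ) / ((cont (y :: t) : ℕ) : ℚ)
    push_cast
    field_simp
    rw [List.tail_cons]

theorem stmt0 {n : ℕ} (a : Fin (n+1) → ℕ) (σ : Equiv.Perm (Fin (n+1))) (k : ℕ)
    (h : IsPermutiple a σ k) :
    ContinuantPreserving a σ ↔
      cont (List.ofFn (a ∘ σ)).tail = k * cont (List.ofFn a).tail := by
  obtain ⟨hpos, -, hk, heq⟩ := h
  set l := List.ofFn a with hl
  set l' := List.ofFn (a ∘ σ) with hl'
  have hlp : ∀ x ∈ l, 0 < x := by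
    intro x hx; rw [hl, List.mem_ofFn] at hx; obtain ⟨j, rfl⟩ := hx; exact hpos j
  have hlp' : ∀ x ∈ l', 0 < x := by
    intro x hx; rw [hl', List.mem_ofFn] at hx; obtain ⟨j, rfl⟩ := hx; exact hpos _
  have hlne : l ≠ [] := by rw [hl]; simp [List.ofFn_eq_nil_iff]
  have hlne' : l' ≠ [] := by rw [hl']; simp [List.ofFn_eq_nil_iff]
  have e1 := cfv_eq l hlp hlne
  have e2 := cfv_eq l' hlp' hlne'
  rw [digitsQ, digitsQ, ← hl, ← hl', coeM_eq, coeM_eq, e1, e2] at heq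
  have hp : (0:ℚ) < cont l := by exact_mod_cast cont_pos l hlp
  have hq : (0:ℚ) < cont l.tail := by
    exact_mod_cast cont_pos l.tail (fun z hz => hlp z (List.mem_of_mem_tail hz))
  have hp' : (0:ℚ) < cont l' := by exact_mod_cast cont_pos l' hlp'
  have hq' : (0:ℚ) < cont l'.tail := by
    exact_mod_cast cont_pos l'.tail (fun z hz => hlp' z (List.mem_of_mem_tail hz))
  have key : (cont l : ℚ) * cont l'.tail = k * cont l' * cont l.tail := by
    field_simp [hq.ne', hq'.ne'] at heq
    linarith [heq]
  constructor
  · intro hcp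
    have hcp' : (cont l : ℚ) = cont l' := by exact_mod_cast hcp
    have : (cont l'.tail : ℚ) = k * cont l.tail := by
      rw [hcp'] at key
      have := mul_left_cancel₀ (ne_of_gt hp') (by linarith [key] : (cont l' : ℚ) * cont l'.tail = cont l' * (k * cont l.tail))
      exact this
    exact_mod_cast this
  · intro hqt
    have hqt' : (cont l'.tail : ℚ) = k * cont l.tail := by exact_mod_cast hqt
    rw [hqt'] at key
    have : (cont l : ℚ) = cont l' := by
      have hkq : (k : ℚ) ≠ 0 := by positivity
      have hq0 : (cont l.tail : ℚ) ≠ 0 := hq.ne'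
      have := mul_right_cancel₀ (mul_ne_zero hkq hq0)
        (by linarith [key] : (cont l : ℚ) * ((k:ℚ) * cont l.tail) = (cont l' : ℚ) * ((k:ℚ) * cont l.tail))
      exact this
    exact_mod_cast this
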